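/- arXiv:1304.5109 — 2 statements merged into one kernel-verified Lean document; each statement's English description precedes it below -/
import Mathlib

section
/- For every N ∈ ℕ, every strategy s from π(N)^{↓0} to π(N+1), and every column i ∈ ℕ, one has |s|_i ∈ {0,1}; that is, each column is fired at most once during any stabilization of π(N)^{↓0}. -/
open scoped Classical

/-- A configuration of KSPM: a sequence of height differences. -/
abbrev Config := ℕ → ℕ

/-- The result of firing column `i` in configuration `σ` (KSPM(D) rule). -/
def fireAt (D : ℕ) (σ : Config) (i : ℕ) : Config := fun j =>
  if j = i then σ i - D
  else if j + 1 = i then σ j + (D - 1)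
  else if j = i + D - 1 then σ j + 1
  else σ j

/-- `σ →_i σ'` : column `i` can be fired in `σ`, producing `σ'`. -/
def Step (D : ℕ) (σ : Config) (i : ℕ) (σ' : Config) : Prop :=
  D ≤ σ i ∧ σ' = fireAt D σ i

/-- `σ → σ'`. -/
def StepRel (D : ℕ) (σ σ' : Config) : Prop := ∃ i, Step D σ i σ'

/-- `σ →* σ'`. -/
def Reaches (D : ℕ) : Config → Config → Prop := Relation.ReflTransGen (StepRel D)

/-- A configuration is stable (a fixed point) when no transition applies. -/
def Stable (D : ℕ) (σ : Config) : Prop := ∀ i, σ i < D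

/-- `Exec D σ s σ'` : the strategy `s` leads from `σ` to `σ'`. -/
def Exec (D : ℕ) : Config → List ℕ → Config → Prop
  | σ, [], σ' => σ' = σ
  | σ, i :: s, σ' => D ≤ σ i ∧ Exec D (fireAt D σ i) s σ'

/-- The initial configuration with `N` stacked grains on column 0. -/
def grains (N : ℕ) : Config := fun i => if i = 0 then N else 0

/-- `σ^{↓0}` : one grain added on column 0. -/
def addGrain (σ : Config) : Config := fun i => if i = 0 then σ i + 1 else σ i

/-- `π(σ)` : the (unique) stable configuration reachable from `σ`. -/
noncomputable def piCfg (D : ℕ) (σ : Config) : Config :=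
  Classical.epsilon fun μ => Reaches D σ μ ∧ Stable D μ

/-- `π(N)` : the stable configuration reached from `N` stacked grains. -/
noncomputable def piN (D N : ℕ) : Config := piCfg D (grains N)

/-- The `k`-th avalanche: the lexicographically least strategy from
`π(k−1)^{↓0}` to `π(k)`. -/
noncomputable def avalanche (D k : ℕ) : List ℕ :=
  Classical.epsilon fun s =>
    Exec D (addGrain (piN D (k - 1))) s (piN D k) ∧
    ∀ s', Exec D (addGrain (piN D (k - 1))) s' (piN D k) →
      s = s' ∨ List.Lex (· < ·) s s'

/-- `p` is a peak of the strategy `s` : it is fired at some time, and is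
larger than every previously fired column. -/
def IsPeak (s : List ℕ) (p : ℕ) : Prop :=
  ∃ t : Fin s.length, s.get t = p ∧ ∀ t' : Fin s.length, t' < t → s.get t' < p

/-- An avalanche is dense from `l` : with `m` its greatest fired column, every
column of `[l, m]` is fired. -/
def DenseFrom (s : List ℕ) (l : ℕ) : Prop :=
  ∃ m, (∀ i, l ≤ i → i ≤ m → i ∈ s) ∧ ∀ i, m < i → i ∉ s

/-- `L'(D,k)` : the least column from which the `k`-th avalanche is dense. -/
noncomputable def Lp (D k : ℕ) : ℕ := sInf {l | DenseFrom (avalanche D k) l}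

/-- The global density column `L(D,N)`. -/
noncomputable def Lgdc (D N : ℕ) : ℕ := (Finset.Icc 1 N).sup (Lp D)

/-- Indices `k ∈ [1,N]` of the long avalanches up to `N` (those firing column
`L(D,N)+D−1`), in increasing order: this enumerates `Φ(D,N)`. -/
noncomputable def longList (D N : ℕ) : List ℕ :=
  (List.range (N + 1)).filter fun k =>
    decide (1 ≤ k ∧ Lgdc D N + D - 1 ∈ avalanche D k)


section AuxKSPM

variable {D : ℕ}

/-- Pointwise effect of a fire, in `ℤ`. -/
lemma fire_delta (hD : 2 ≤ D) (σ : Config) (j : ℕ) (hj : D ≤ σ j) (i : ℕ) :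
    ((fireAt D σ j i : ℕ) : ℤ) = (σ i : ℤ) + (if i = j then -(D:ℤ) else 0)
      + (if i + 1 = j then (D:ℤ) - 1 else 0) + (if i = j + D - 1 then 1 else 0) := by
  simp only [fireAt]
  by_cases h1 : i = j
  · subst h1
    split_ifs <;> omega
  · split_ifs <;> omega

/-- Grain-count formula along an execution. -/
lemma exec_val (hD : 2 ≤ D) :
    ∀ (s : List ℕ) (σ σ' : Config), Exec D σ s σ' → ∀ i : ℕ,
      (σ' i : ℤ) = (σ i : ℤ) + ((D:ℤ) - 1) * (s.count (i+1) : ℤ)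
        + ((s.countP fun k => decide (i = k + D - 1)) : ℤ) - (D:ℤ) * (s.count i : ℤ) := by
  intro s
  induction s with
  | nil =>
    intro σ σ' h i
    simp only [Exec] at h
    subst h
    simp
  | cons j t ih =>
    intro σ σ' h i
    obtain ⟨hj, ht⟩ := h
    have hrec := ih _ _ ht i
    rw [fire_delta hD σ j hj i] at hrec
    rw [List.count_cons, List.count_cons, List.countP_cons]
    simp only [beq_iff_eq, decide_eq_true_eq]
    split_ifs at hrec ⊢ <;>
      first
        | (exfalso; omega)
        | (push_cast at hrec ⊢; linear_combination hrec)

/-- weighted sums over an initial segment -/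
def wsum (f : ℕ → ℤ) (B : ℕ) (σ : Config) : ℤ := ∑ i ∈ Finset.range B, f i * (σ i : ℤ)

lemma wsum_stab (f : ℕ → ℤ) {B B' : ℕ} {σ : Config}
    (h : ∀ k, B ≤ k → σ k = 0) (hBB : B ≤ B') : wsum f B' σ = wsum f B σ := by
  unfold wsum
  refine (Finset.sum_subset (Finset.range_subset_range.mpr hBB) ?_).symm
  intro x hx hnx
  have hx0 : σ x = 0 := h x (by simpa using hnx)
  simp [hx0]

lemma wsum_fire (hD : 2 ≤ D) (f : ℕ → ℤ) (B : ℕ) (σ : Config) (j : ℕ)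
    (hj : D ≤ σ j) (hB : j + D ≤ B) :
    wsum f B (fireAt D σ j) =
      wsum f B σ + f (j + D - 1) + (if j = 0 then 0 else ((D:ℤ) - 1) * f (j - 1))
        - (D:ℤ) * f j := by
  have key : ∀ i, f i * ((fireAt D σ j i : ℕ) : ℤ) =
      f i * (σ i : ℤ) + ((if i = j then -(D:ℤ) * f i else 0) +
        ((if i + 1 = j then ((D:ℤ) - 1) * f i else 0) +
         (if i = j + D - 1 then f i else 0))) := by
    intro i
    rw [fire_delta hD σ j hj i]
    split_ifs <;> ring
  unfold wsum
  simp only [key]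
  rw [Finset.sum_add_distrib, Finset.sum_add_distrib, Finset.sum_add_distrib]
  have h1 : (∑ i ∈ Finset.range B, if i = j then -(D:ℤ) * f i else 0)
      = -(D:ℤ) * f j := by
    rw [Finset.sum_ite_eq' (Finset.range B) j (fun i => -(D:ℤ) * f i),
      if_pos (Finset.mem_range.mpr (by omega))]
  have h3 : (∑ i ∈ Finset.range B, if i = j + D - 1 then f i else 0) = f (j + D - 1) := by
    rw [Finset.sum_ite_eq' (Finset.range B) (j + D - 1) f,
      if_pos (Finset.mem_range.mpr (by omega))]
  have h2 : (∑ i ∈ Finset.range B, if i + 1 = j then ((D:ℤ) - 1) * f i else 0)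
      = if j = 0 then 0 else ((D:ℤ) - 1) * f (j - 1) := by
    rcases j with _ | m
    · simp
    · rw [if_neg (Nat.succ_ne_zero m)]
      have hcong : ∀ i : ℕ, (if i + 1 = m + 1 then ((D:ℤ) - 1) * f i else 0)
          = (if i = m then ((D:ℤ) - 1) * f i else 0) := by
        intro i
        exact if_congr (by omega) rfl rfl
      simp only [hcong]
      rw [Finset.sum_ite_eq' (Finset.range B) m (fun i => ((D:ℤ) - 1) * f i),
        if_pos (Finset.mem_range.mpr (by omega))]
      simp
  rw [h1, h2, h3]
  ring

/-- The termination measure. -/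
def msr (B : ℕ) (σ : Config) : ℤ :=
  ((wsum (fun i => (i:ℤ) + 1) B σ)^2 + 1) * wsum (fun _ => 1) B σ +
    ((wsum (fun i => (i:ℤ) + 1) B σ)^2 - wsum (fun i => (i:ℤ)^2) B σ)

lemma msr_stab {B B' : ℕ} {σ : Config}
    (h : ∀ k, B ≤ k → σ k = 0) (hBB : B ≤ B') : msr B' σ = msr B σ := by
  unfold msr
  rw [wsum_stab (fun i => (i:ℤ) + 1) h hBB, wsum_stab (fun _ => 1) h hBB,
    wsum_stab (fun i => (i:ℤ)^2) h hBB]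

lemma S_nonneg (B : ℕ) (σ : Config) : 0 ≤ wsum (fun _ => 1) B σ :=
  Finset.sum_nonneg fun i _ => by positivity

lemma W_nonneg (B : ℕ) (σ : Config) : 0 ≤ wsum (fun i => (i:ℤ) + 1) B σ :=
  Finset.sum_nonneg fun i _ => by positivity

lemma Q_le_W_sq (B : ℕ) (σ : Config) :
    wsum (fun i => (i:ℤ)^2) B σ ≤ (wsum (fun i => (i:ℤ) + 1) B σ)^2 := by
  have hW := W_nonneg B σ
  have hstep : wsum (fun i => (i:ℤ)^2) B σ ≤
      ∑ i ∈ Finset.range B, wsum (fun i => (i:ℤ) + 1) B σ * (((i:ℤ) + 1) * (σ i : ℤ)) := by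
    apply Finset.sum_le_sum
    intro i hi
    beta_reduce
    rcases Nat.eq_zero_or_pos (σ i) with h | h
    · simp [h]
    · have hσ : (1:ℤ) ≤ (σ i : ℤ) := by exact_mod_cast h
      have h1 : ((i:ℤ) + 1) ≤ ((i:ℤ) + 1) * (σ i : ℤ) :=
        le_mul_of_one_le_right (by positivity) hσ
      have h2 : ((i:ℤ) + 1) * (σ i : ℤ) ≤ wsum (fun i => (i:ℤ) + 1) B σ :=
        Finset.single_le_sum (f := fun (i : ℕ) => ((i:ℤ) + 1) * (σ i : ℤ))
          (fun k _ => by positivity) hi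
      have h3 : ((i:ℤ) + 1) ≤ wsum (fun i => (i:ℤ) + 1) B σ := le_trans h1 h2
      have hi0 : (0:ℤ) ≤ (i:ℤ) := by positivity
      have hσ0 : (0:ℤ) ≤ (σ i : ℤ) := by positivity
      nlinarith [mul_le_mul_of_nonneg_right h3 (mul_nonneg (show (0:ℤ) ≤ (i:ℤ)+1 by positivity) hσ0)]
  calc wsum (fun i => (i:ℤ)^2) B σ
      ≤ ∑ i ∈ Finset.range B, wsum (fun i => (i:ℤ) + 1) B σ * (((i:ℤ) + 1) * (σ i : ℤ)) := hstep
    _ = (wsum (fun i => (i:ℤ) + 1) B σ)^2 := by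
        rw [← Finset.mul_sum]
        unfold wsum
        ring

lemma msr_nonneg (B : ℕ) (σ : Config) : 0 ≤ msr B σ := by
  have h1 := S_nonneg B σ
  have h2 := Q_le_W_sq B σ
  have h3 := sq_nonneg (wsum (fun i => (i:ℤ) + 1) B σ)
  unfold msr
  nlinarith

lemma msr_fire (hD : 2 ≤ D) (σ : Config) (j B : ℕ) (hj : D ≤ σ j) (hB : j + D ≤ B) :
    msr B (fireAt D σ j) ≤ msr B σ - 1 := by
  have hD' : (2:ℤ) ≤ (D:ℤ) := by exact_mod_cast hD
  have hS := wsum_fire hD (fun _ => (1:ℤ)) B σ j hj hB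
  have hW := wsum_fire hD (fun i => (i:ℤ) + 1) B σ j hj hB
  have hQ := wsum_fire hD (fun i => (i:ℤ)^2) B σ j hj hB
  beta_reduce at hS hW hQ
  have hc1 : ((j + D - 1 : ℕ) : ℤ) = (j:ℤ) + (D:ℤ) - 1 := by omega
  rcases Nat.eq_zero_or_pos j with hj0 | hj0
  · subst hj0
    rw [if_pos rfl] at hS hW hQ
    have hS' : wsum (fun _ => 1) B (fireAt D σ 0) = wsum (fun _ => 1) B σ + 1 - D := by
      rw [hS]; ring
    have hW' : wsum (fun i => (i:ℤ) + 1) B (fireAt D σ 0)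
        = wsum (fun i => (i:ℤ) + 1) B σ := by
      rw [hW, hc1]; push_cast; ring
    have hQ' : wsum (fun i => (i:ℤ)^2) B (fireAt D σ 0)
        = wsum (fun i => (i:ℤ)^2) B σ + ((D:ℤ) - 1)^2 := by
      rw [hQ, hc1]; push_cast; ring
    have hs0 := S_nonneg B σ
    have hw2 := sq_nonneg (wsum (fun i => (i:ℤ) + 1) B σ)
    unfold msr
    rw [hS', hW', hQ']
    nlinarith
  · have hjne : j ≠ 0 := by omega
    rw [if_neg hjne] at hS hW hQ
    have hc2 : ((j - 1 : ℕ) : ℤ) = (j:ℤ) - 1 := by omega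
    have hS' : wsum (fun _ => 1) B (fireAt D σ j) = wsum (fun _ => 1) B σ := by
      rw [hS]; ring
    have hW' : wsum (fun i => (i:ℤ) + 1) B (fireAt D σ j)
        = wsum (fun i => (i:ℤ) + 1) B σ := by
      rw [hW, hc1, hc2]; ring
    have hQ' : wsum (fun i => (i:ℤ)^2) B (fireAt D σ j)
        = wsum (fun i => (i:ℤ)^2) B σ + (D:ℤ) * ((D:ℤ) - 1) := by
      rw [hQ, hc1, hc2]; ring
    unfold msr
    rw [hS', hW', hQ']
    nlinarith

/-- Termination: any finitely supported configuration reaches a stable one. -/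
lemma terminate (hD : 2 ≤ D) :
    ∀ (n : ℕ) (B : ℕ) (σ : Config), (∀ k, B ≤ k → σ k = 0) → msr B σ ≤ (n : ℤ) →
      ∃ μ, Reaches D σ μ ∧ Stable D μ := by
  intro n
  induction n with
  | zero =>
    intro B σ hsupp hm
    by_cases hst : Stable D σ
    · exact ⟨σ, Relation.ReflTransGen.refl, hst⟩
    · exfalso
      unfold Stable at hst
      push_neg at hst
      obtain ⟨j, hj⟩ := hst
      have hjB : j < B := by
        by_contra h
        have := hsupp j (le_of_not_gt h)
        omega
      have h1 := msr_fire hD σ j (B + D) hj (by omega)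
      have h2 : msr (B + D) σ = msr B σ := msr_stab hsupp (by omega)
      have h3 := msr_nonneg (B + D) (fireAt D σ j)
      simp only [Nat.cast_zero] at hm
      linarith
  | succ n ih =>
    intro B σ hsupp hm
    by_cases hst : Stable D σ
    · exact ⟨σ, Relation.ReflTransGen.refl, hst⟩
    · unfold Stable at hst
      push_neg at hst
      obtain ⟨j, hj⟩ := hst
      have hjB : j < B := by
        by_contra h
        have := hsupp j (le_of_not_gt h)
        omega
      have hsupp' : ∀ k, B + D ≤ k → fireAt D σ j k = 0 := by
        intro k hk
        unfold fireAt
        rw [if_neg (by omega), if_neg (by omega), if_neg (by omega)]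
        exact hsupp k (by omega)
      have h1 := msr_fire hD σ j (B + D) hj (by omega)
      have h2 : msr (B + D) σ = msr B σ := msr_stab hsupp (by omega)
      have hm' : msr (B + D) (fireAt D σ j) ≤ (n : ℤ) := by
        push_cast at hm ⊢
        linarith
      obtain ⟨μ, hr, hstb⟩ := ih (B + D) (fireAt D σ j) hsupp' hm'
      exact ⟨μ, Relation.ReflTransGen.head ⟨j, hj, rfl⟩ hr, hstb⟩

lemma stable_piN (hD : 2 ≤ D) (N : ℕ) : Stable D (piN D N) := by
  have hsupp : ∀ k, 1 ≤ k → grains N k = 0 := by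
    intro k hk
    simp [grains]
    omega
  have hex : ∃ μ, Reaches D (grains N) μ ∧ Stable D μ :=
    terminate hD (msr 1 (grains N)).toNat 1 (grains N) hsupp (Int.self_le_toNat _)
  unfold piN piCfg
  exact (Classical.epsilon_spec hex).2

lemma exec_append :
    ∀ (p r : List ℕ) (σ σ' : Config), Exec D σ (p ++ r) σ' →
      ∃ τ, Exec D σ p τ ∧ Exec D τ r σ' := by
  intro p
  induction p with
  | nil =>
    intro r σ σ' h
    exact ⟨σ, rfl, h⟩
  | cons a p ih =>
    intro r σ σ' h
    obtain ⟨ha, h'⟩ := h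
    obtain ⟨τ, h1, h2⟩ := ih r _ σ' h'
    exact ⟨τ, ⟨ha, h1⟩, h2⟩

lemma exists_dup_split {l : List ℕ} (h : ¬ l.Nodup) :
    ∃ p j q, l = p ++ j :: q ∧ p.Nodup ∧ j ∈ p := by
  induction l with
  | nil => simp at h
  | cons a t ih =>
    by_cases ht : t.Nodup
    · have ha : a ∈ t := by
        by_contra hna
        exact h (List.nodup_cons.mpr ⟨hna, ht⟩)
      obtain ⟨p1, q1, rfl⟩ := List.append_of_mem ha
      have hmid := List.nodup_middle.mp ht
      obtain ⟨hnm, hnd⟩ := List.nodup_cons.mp hmid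
      have hna1 : a ∉ p1 := fun hc => hnm (List.mem_append.mpr (Or.inl hc))
      exact ⟨a :: p1, a, q1, by simp,
        List.nodup_cons.mpr ⟨hna1, (List.sublist_append_left p1 q1).nodup hnd⟩,
        List.mem_cons_self⟩
    · obtain ⟨p, j, q, hteq, hpnd, hjp⟩ := ih ht
      by_cases hap : a ∈ p
      · obtain ⟨p1, p2, rfl⟩ := List.append_of_mem hap
        have hmid := List.nodup_middle.mp hpnd
        obtain ⟨hnm, hnd⟩ := List.nodup_cons.mp hmid
        have hna1 : a ∉ p1 := fun hc => hnm (List.mem_append.mpr (Or.inl hc))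
        refine ⟨a :: p1, a, p2 ++ j :: q, ?_, ?_, List.mem_cons_self⟩
        · rw [hteq]; simp
        · exact List.nodup_cons.mpr ⟨hna1, (List.sublist_append_left p1 p2).nodup hnd⟩
      · exact ⟨a :: p, j, q, by rw [hteq]; rfl,
          List.nodup_cons.mpr ⟨hap, hpnd⟩, List.mem_cons_of_mem a hjp⟩

lemma countP_le_one {pfn : ℕ → Bool}
    (hinj : ∀ a b, pfn a = true → pfn b = true → a = b) :
    ∀ {l : List ℕ}, l.Nodup → l.countP pfn ≤ 1 := by
  intro l
  induction l with
  | nil => intro _; simp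
  | cons a t ih =>
    intro h
    obtain ⟨hat, htd⟩ := List.nodup_cons.mp h
    rw [List.countP_cons]
    by_cases hpa : pfn a = true
    · have h0 : t.countP pfn = 0 := by
        rw [List.countP_eq_zero]
        intro b hb hpb
        exact hat ((hinj a b hpa hpb) ▸ hb)
      simp [h0, hpa]
    · simp [hpa, ih htd]

end AuxKSPM

/-- Each column is fired at most once during any stabilization of
`π(N)^{↓0}`: for every strategy `s` from `π(N)^{↓0}` to `π(N+1)` and every
column `i`, `|s|_i ∈ {0,1}`. -/
theorem strategy_fires_each_column_at_most_once (D : ℕ) (hD : 2 ≤ D)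
    (N : ℕ) (s : List ℕ)
    (hs : Exec D (addGrain (piN D N)) s (piN D (N + 1))) :
    ∀ i : ℕ, s.count i ≤ 1 := by
  intro i
  by_contra hcnt
  push_neg at hcnt
  have h2c : 2 ≤ s.count i := hcnt
  have hnd : ¬ s.Nodup := by
    intro hn
    have := List.nodup_iff_count_le_one.mp hn i
    omega
  obtain ⟨p, j, q, hsplit, hpnd, hjp⟩ := exists_dup_split hnd
  subst hsplit
  obtain ⟨τ, hexp, hexq⟩ := exec_append p (j :: q) _ _ hs
  have hτj : D ≤ τ j := hexq.1
  have hval := exec_val hD p _ τ hexp j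
  have hstab : Stable D (piN D N) := stable_piN hD N
  have hc0 : p.count j = 1 := List.count_eq_one_of_mem hpnd hjp
  have hc1 : p.count (j + 1) ≤ 1 := List.nodup_iff_count_le_one.mp hpnd _
  have hc2 : p.countP (fun k => decide (j = k + D - 1)) ≤ 1 := by
    apply countP_le_one _ hpnd
    intro a b hpa hpb
    simp only [decide_eq_true_eq] at hpa hpb
    omega
  have hτ : (D:ℤ) ≤ (τ j : ℤ) := by exact_mod_cast hτj
  rw [hc0] at hval
  by_cases hj0 : j = 0
  · subst hj0
    have hc2' : p.countP (fun k => decide (0 = k + D - 1)) = 0 := by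
      rw [List.countP_eq_zero]
      intro b hb
      simp only [decide_eq_true_eq]
      omega
    rw [hc2'] at hval
    have hb : addGrain (piN D N) 0 ≤ D := by
      have := hstab 0
      simp [addGrain]
      omega
    have hc1' : p.count (0 + 1) = 0 ∨ p.count (0 + 1) = 1 := by omega
    rcases hc1' with h | h <;> rw [h] at hval <;> push_cast at hval <;>
      · have hb' : ((addGrain (piN D N) 0 : ℕ) : ℤ) ≤ (D:ℤ) := by exact_mod_cast hb
        nlinarith
  · have hb : addGrain (piN D N) j < D := by
      have := hstab j
      simp [addGrain, hj0]
      omega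
    have hb' : ((addGrain (piN D N) j : ℕ) : ℤ) < (D:ℤ) := by exact_mod_cast hb
    have hc2' : ((p.countP fun k => decide (j = k + D - 1)) : ℤ) ≤ 1 := by exact_mod_cast hc2
    have hc1' : p.count (j + 1) = 0 ∨ p.count (j + 1) = 1 := by omega
    rcases hc1' with h | h <;> rw [h] at hval <;> push_cast at hval <;> nlinarith
end

section
/- For every word v in the language L = {ab·u : u a word over {a,b}} ∪ {ε, a}, the maximal height satisfies g(t(v)) ≤ g(v)/4 + 1; equivalently, g(t(v)) − 4/3 ≤ (g(v) − 4/3)/4. -/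
/-- States of the KSPM(3) transducer. -/
inductive TSt | s00 | s10 | s20 | s11 | s12 | s21 | s22
  deriving DecidableEq

/-- Letters: `a = false`, `b = true`. Transition function of the transducer:
(state, input letter) ↦ (next state, output word). -/
def tStep : TSt → Bool → TSt × List Bool
  | .s00, false => (.s10, [])
  | .s00, true  => (.s11, [])
  | .s10, false => (.s20, [])
  | .s10, true  => (.s21, [])
  | .s20, false => (.s11, [])
  | .s20, true  => (.s12, [])
  | .s11, false => (.s21, [])
  | .s11, true  => (.s22, [])
  | .s12, false => (.s22, [])
  | .s12, true  => (.s21, [true])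
  | .s21, false => (.s12, [false])
  | .s21, true  => (.s11, [false, true])
  | .s22, false => (.s11, [true, false])
  | .s22, true  => (.s12, [true, false])

/-- Run the transducer on a word from a given state, concatenating outputs. -/
def runT : TSt → List Bool → List Bool
  | _, [] => []
  | q, x :: u => (tStep q x).2 ++ runT (tStep q x).1 u

/-- `t(u)` : run from the initial state `00`. -/
def tT (u : List Bool) : List Bool := runT .s00 u

/-- `t'(u)` : run from the state `21`. -/
def tT' (u : List Bool) : List Bool := runT .s21 u

/-- `w` is a prefix of the infinite periodic word `(ab)^ω` (with `a = false`,
`b = true`): the letter at position `i` is `a` iff `i` is even. -/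
def PrefixAB (w : List Bool) : Prop :=
  ∀ i (hi : i < w.length), w.get ⟨i, hi⟩ = decide (i % 2 = 1)

/-- The language `L = {ab·u : u word} ∪ {ε, a}`. -/
def LangL : Set (List Bool) :=
  {w | ∃ u : List Bool, w = false :: true :: u} ∪ {[], [false]}

/-- The height `h(u) = | |u|_a − |u|_b |`. -/
def hgt (u : List Bool) : ℕ :=
  ((u.count false : ℤ) - (u.count true : ℤ)).natAbs

/-- The maximal height `g(u) = max { h(u') : u' prefix of u }`. -/
def gmax (u : List Bool) : ℕ := (u.inits.map hgt).foldr max 0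

/-- Integer balance: #a − #b. -/
def bal (w : List Bool) : ℤ := (w.count false : ℤ) - w.count true

lemma bal_append (x y : List Bool) : bal (x ++ y) = bal x + bal y := by
  simp [bal, List.count_append]; ring

lemma bal_cons (c : Bool) (w : List Bool) :
    bal (c :: w) = (if c then -1 else 1) + bal w := by
  cases c <;> simp [bal, List.count_cons] <;> ring

lemma hgt_eq (u : List Bool) : hgt u = (bal u).natAbs := rfl

/-- Potential function on recurrent states. -/
def fS : TSt → ℤ
  | .s11 => 0 | .s21 => 1 | .s22 => -1 | .s12 => -2 | _ => 0

def RecSt (q : TSt) : Prop := q = .s11 ∨ q = .s12 ∨ q = .s21 ∨ q = .s22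

lemma prefix_split {α : Type*} {w o L : List α} (h : w <+: o ++ L) :
    w <+: o ∨ ∃ w', w = o ++ w' ∧ w' <+: L := by
  rcases h with ⟨t, ht⟩
  rcases List.append_eq_append_iff.mp ht with ⟨a', h1, _⟩ | ⟨c', h1, h2⟩
  · exact Or.inl ⟨a', h1.symm⟩
  · exact Or.inr ⟨c', h1, ⟨t, h2.symm⟩⟩

lemma prefix_single {α : Type*} {w : List α} {a : α} (h : w <+: [a]) :
    w = [] ∨ w = [a] := by
  rcases h with ⟨t, ht⟩
  cases w with
  | nil => exact Or.inl rfl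
  | cons c w' =>
    simp only [List.cons_append, List.cons.injEq] at ht
    obtain ⟨rfl, ht⟩ := ht
    rcases List.append_eq_nil_iff.mp ht with ⟨rfl, -⟩
    exact Or.inr rfl

lemma prefix_pair {α : Type*} {w : List α} {a b : α} (h : w <+: [a, b]) :
    w = [] ∨ w = [a] ∨ w = [a, b] := by
  cases w with
  | nil => exact Or.inl rfl
  | cons c w' =>
    rw [List.cons_prefix_cons] at h
    obtain ⟨rfl, h⟩ := h
    rcases prefix_single h with rfl | rfl
    · exact Or.inr (Or.inl rfl)
    · exact Or.inr (Or.inr rfl)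

lemma cons_pref {x : Bool} {p u : List Bool} (h : p <+: u) :
    x :: p <+: x :: u := by
  rw [List.cons_prefix_cons]; exact ⟨rfl, h⟩

/-- Main invariant lemma: running from a recurrent state, if all prefix
balances (shifted by the potential) lie in `[lo, hi]`, then four times the
balance of any output prefix lies in `[lo - 3, hi + 3]`. -/
lemma main_inv : ∀ (u : List Bool) (q : TSt), RecSt q → ∀ (lo hi : ℤ),
    (∀ p, p <+: u → lo ≤ bal p + fS q ∧ bal p + fS q ≤ hi) →
    ∀ w, w <+: runT q u → lo - 3 ≤ 4 * bal w ∧ 4 * bal w ≤ hi + 3 := by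
  intro u
  induction u with
  | nil =>
    intro q hq lo hi hB w hw
    simp only [runT, List.prefix_nil] at hw
    subst hw
    have h0 := hB [] List.nil_prefix
    rcases hq with rfl | rfl | rfl | rfl <;> simp [fS, bal] at h0 ⊢ <;> omega
  | cons x u' ih =>
    intro q hq lo hi hB w hw
    have h0 := hB [] List.nil_prefix
    have h1 := hB [x] ⟨u', rfl⟩
    rcases hq with rfl | rfl | rfl | rfl <;> cases x <;>
      simp only [runT, tStep, List.nil_append] at hw
    -- s11, a : to s21, output ε
    · refine ih .s21 (Or.inr (Or.inr (Or.inl rfl))) lo hi ?_ w hw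
      intro p hp
      have := hB (false :: p) (cons_pref hp)
      simp [fS, bal_cons] at this ⊢; omega
    -- s11, b : to s22, output ε
    · refine ih .s22 (Or.inr (Or.inr (Or.inr rfl))) lo hi ?_ w hw
      intro p hp
      have := hB (true :: p) (cons_pref hp)
      simp [fS, bal_cons] at this ⊢; omega
    -- s12, a : to s22, output ε
    · refine ih .s22 (Or.inr (Or.inr (Or.inr rfl))) lo hi ?_ w hw
      intro p hp
      have := hB (false :: p) (cons_pref hp)
      simp [fS, bal_cons] at this ⊢; omega
    -- s12, b : to s21, output [b]
    · rcases prefix_split hw with hw1 | ⟨w', rfl, hw'⟩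
      · rcases prefix_single hw1 with rfl | rfl <;>
          simp [fS, bal, List.count] at h0 h1 ⊢ <;> omega
      · have key := ih .s21 (Or.inr (Or.inr (Or.inl rfl))) (lo + 4) (hi + 4)
          (fun p hp => by
            have := hB (true :: p) (cons_pref hp)
            simp [fS, bal_cons] at this ⊢; omega) w' hw'
        rw [bal_append]
        have : bal [true] = -1 := by simp [bal, List.count]
        rw [this]; omega
    -- s21, a : to s12, output [a]
    · rcases prefix_split hw with hw1 | ⟨w', rfl, hw'⟩
      · rcases prefix_single hw1 with rfl | rfl <;>
          simp [fS, bal, List.count] at h0 h1 ⊢ <;> omega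
      · have key := ih .s12 (Or.inr (Or.inl rfl)) (lo - 4) (hi - 4)
          (fun p hp => by
            have := hB (false :: p) (cons_pref hp)
            simp [fS, bal_cons] at this ⊢; omega) w' hw'
        rw [bal_append]
        have : bal [false] = 1 := by simp [bal, List.count]
        rw [this]; omega
    -- s21, b : to s11, output [a, b]
    · rcases prefix_split hw with hw1 | ⟨w', rfl, hw'⟩
      · rcases prefix_pair hw1 with rfl | rfl | rfl <;>
          simp [fS, bal, List.count] at h0 h1 ⊢ <;> omega
      · have key := ih .s11 (Or.inl rfl) lo hi
          (fun p hp => by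
            have := hB (true :: p) (cons_pref hp)
            simp [fS, bal_cons] at this ⊢; omega) w' hw'
        rw [bal_append]
        have : bal [false, true] = 0 := by simp [bal, List.count]
        rw [this]; omega
    -- s22, a : to s11, output [b, a]
    · rcases prefix_split hw with hw1 | ⟨w', rfl, hw'⟩
      · rcases prefix_pair hw1 with rfl | rfl | rfl <;>
          simp [fS, bal, List.count] at h0 h1 ⊢ <;> omega
      · have key := ih .s11 (Or.inl rfl) lo hi
          (fun p hp => by
            have := hB (false :: p) (cons_pref hp)
            simp [fS, bal_cons] at this ⊢; omega) w' hw'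
        rw [bal_append]
        have : bal [true, false] = 0 := by simp [bal, List.count]
        rw [this]; omega
    -- s22, b : to s12, output [b, a]
    · rcases prefix_split hw with hw1 | ⟨w', rfl, hw'⟩
      · rcases prefix_pair hw1 with rfl | rfl | rfl <;>
          simp [fS, bal, List.count] at h0 h1 ⊢ <;> omega
      · have key := ih .s12 (Or.inr (Or.inl rfl)) lo hi
          (fun p hp => by
            have := hB (true :: p) (cons_pref hp)
            simp [fS, bal_cons] at this ⊢; omega) w' hw'
        rw [bal_append]
        have : bal [true, false] = 0 := by simp [bal, List.count]
        rw [this]; omega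

lemma elem_le_foldr_max : ∀ {l : List ℕ} {x : ℕ}, x ∈ l → x ≤ l.foldr max 0 := by
  intro l
  induction l with
  | nil => simp
  | cons a l ih =>
    intro x hx
    rcases List.mem_cons.mp hx with rfl | hx
    · exact le_max_left _ _
    · exact le_trans (ih hx) (le_max_right _ _)

lemma foldr_max_le {l : List ℕ} {n : ℕ} (h : ∀ x ∈ l, 4 * x ≤ n) :
    4 * l.foldr max 0 ≤ n := by
  induction l with
  | nil => simp
  | cons a l ih =>
    simp only [List.foldr_cons]
    have h1 := h a List.mem_cons_self
    have h2 := ih (fun x hx => h x (List.mem_cons_of_mem _ hx))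
    rcases Nat.le_total a (l.foldr max 0) with hle | hle
    · rw [max_eq_right hle]; exact h2
    · rw [max_eq_left hle]; exact h1

lemma hgt_le_gmax {p u : List Bool} (h : p <+: u) : hgt p ≤ gmax u :=
  elem_le_foldr_max (List.mem_map_of_mem ((List.mem_inits _ _).mpr h))

/-- For every `v` in the language `L`, the maximal height satisfies
`g(t(v)) ≤ g(v)/4 + 1`. -/
theorem transducer_maximal_height_decrease :
    ∀ v ∈ LangL, (gmax (tT v) : ℝ) ≤ (gmax v : ℝ) / 4 + 1 := by
  intro v hv
  rcases hv with ⟨u, rfl⟩ | hv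
  · -- v = false :: true :: u
    set G := gmax (false :: true :: u) with hG
    have hpre : ∀ p, p <+: u → (bal p).natAbs ≤ G := by
      intro p hp
      have h1 : hgt (false :: true :: p) ≤ G :=
        hgt_le_gmax (cons_pref (cons_pref hp))
      rw [hgt_eq] at h1
      have h2 : bal (false :: true :: p) = bal p := by
        simp [bal_cons]
      rw [h2] at h1
      exact h1
    have hinv := main_inv u .s21 (Or.inr (Or.inr (Or.inl rfl)))
      (-(G : ℤ) + 1) ((G : ℤ) + 1)
      (fun p hp => by
        have := hpre p hp
        simp [fS]; omega)
    have hrun : tT (false :: true :: u) = runT .s21 u := rfl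
    have hbound : 4 * gmax (tT (false :: true :: u)) ≤ G + 4 := by
      apply foldr_max_le
      intro x hx
      rcases List.mem_map.mp hx with ⟨w, hw, rfl⟩
      have hw' : w <+: runT .s21 u := by
        rw [← hrun]; exact (List.mem_inits _ _).mp hw
      have := hinv w hw'
      rw [hgt_eq]
      omega
    have hGr : (4 : ℝ) * gmax (tT (false :: true :: u)) ≤ (G : ℝ) + 4 := by
      exact_mod_cast hbound
    linarith
  · rcases hv with rfl | rfl
    · norm_num [tT, runT, gmax, hgt, List.inits]
    · have h1 : tT [false] = [] := rfl
      rw [h1]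
      norm_num [gmax, hgt, List.inits, bal, List.count]
end
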